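/- Let Θ be a relational language, let F be a countably infinite ultrahomogeneous Θ-structure whose age has the strong amalgamation property, and let ⊏ be a linear order on the universe of F of order type ω. Let (A,≺) be a structure such that A embeds into F and ≺ is a linear order on the universe of A with (A,≺) finite or of order type ω. Then for every positive integer t: if F ⟶ (F)^A_{k,t} holds for all k ≥ 2 (colorings of Θ-embeddings A → F, with witnesses among Θ-embeddings F → F), then (F,⊏) ⟶ ((F,⊏))^{(A,≺)}_{k,t} holds for all k ≥ 2 (colorings of order-preserving Θ-embeddings (A,≺) → (F,⊏), with witnesses among order-preserving Θ-embeddings (F,⊏) → (F,⊏)). In particular, if A has finite big Ramsey degree T(A,F) in F, then (A,≺) has finite big Ramsey degree in (F,⊏) and T((A,≺),(F,⊏)) ≤ T(A,F). -/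

import Mathlib

open FirstOrder Language Structure

namespace Stmt7Aux

variable {L : Language} [L.IsRelational] {F : Type} [L.Structure F]

def relSub (s : Set F) : L.Substructure F := ⟨s, fun f => isEmptyElim f⟩

def IsPE (e : F ≃ ℕ) {n : ℕ} (v : Fin n → F) : Prop :=
  Function.Injective v ∧ ∀ (m : ℕ) (R : L.Relations m) (t : Fin m → Fin n),
    RelMap (M := F) R (fun k => e.symm ((t k) : ℕ)) ↔ RelMap R (fun k => v (t k))

variable (e : F ≃ ℕ)

def iniSub (n : ℕ) : L.Substructure F := relSub (Set.range fun i : Fin n => e.symm (i : ℕ))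

noncomputable instance finIni (n : ℕ) : Finite (iniSub (L := L) e n) := by
  have : (Set.range fun i : Fin n => e.symm (i : ℕ)).Finite := Set.finite_range _
  exact this.to_subtype

lemma idx_lt {n : ℕ} (x : iniSub (L := L) e n) : e (x : F) < n := by
  obtain ⟨i, hi⟩ := x.2
  rw [← hi, Equiv.apply_symm_apply]
  exact i.2

noncomputable def embOfPE {n : ℕ} {v : Fin n → F} (hv : IsPE (L := L) e v) :
    (iniSub (L := L) e n) ↪[L] F where
  toFun x := v ⟨e (x : F), idx_lt e x⟩
  inj' := by
    intro x y hxy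
    have := hv.1 hxy
    have h2 : e (x : F) = e (y : F) := congrArg Fin.val this
    exact Subtype.ext (e.injective h2)
  map_fun' := fun f => isEmptyElim f
  map_rel' := by
    intro m R y
    have h := hv.2 m R (fun k => ⟨e ((y k : F)), idx_lt e (y k)⟩)
    have h1 : (fun k => e.symm ((e ((y k : F)) : ℕ))) = fun k => ((y k : F)) := by
      funext k; exact e.symm_apply_apply _
    rw [h1] at h
    exact h.symm

/-- extend a tuple by one element -/
def ext1 {n : ℕ} (v : Fin n → F) (z : F) : Fin (n+1) → F :=
  fun i => if h : (i : ℕ) < n then v ⟨i, h⟩ else z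

lemma ext1_lt {n : ℕ} (v : Fin n → F) (z : F) {i : Fin (n+1)} (h : (i : ℕ) < n) :
    ext1 v z i = v ⟨i, h⟩ := dif_pos h

lemma ext1_last {n : ℕ} (v : Fin n → F) (z : F) {i : Fin (n+1)} (h : ¬ (i : ℕ) < n) :
    ext1 v z i = z := dif_neg h

lemma Znonempty (ultra : ∀ (A : Type) [L.Structure A], Finite A → Nonempty (A ↪[L] F) →
      ∀ f g : A ↪[L] F, ∃ h : F ≃[L] F, ∀ a : A, f a = h (g a))
    {n : ℕ} {v : Fin n → F} (hv : IsPE (L := L) e v) :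
    ∃ z : F, IsPE (L := L) e (ext1 v z) := by
  obtain ⟨α, hα⟩ := ultra (iniSub (L := L) e n) (finIni e n) ⟨(iniSub (L := L) e n).subtype⟩
    (embOfPE e hv) (iniSub (L := L) e n).subtype
  have hv' : ∀ i : Fin n, v i = α (e.symm (i : ℕ)) := by
    intro i
    set a : iniSub (L := L) e n := ⟨e.symm (i : ℕ), ⟨i, rfl⟩⟩ with ha
    have key := hα a
    have h1 : embOfPE (L := L) e hv a = v ⟨e (a : F), idx_lt e a⟩ := rfl
    have h2 : (⟨e (a : F), idx_lt e a⟩ : Fin n) = i := Fin.ext (by simp [ha])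
    rw [h1, h2] at key
    exact key
  set z := α (e.symm (n : ℕ)) with hz
  have hcomp : ∀ i : Fin (n+1), ext1 v z i = α (e.symm (i : ℕ)) := by
    intro i
    by_cases h : (i : ℕ) < n
    · rw [ext1_lt v z h, hv' ⟨i, h⟩]
    · rw [ext1_last v z h]
      have : (i : ℕ) = n := Nat.le_antisymm (Nat.lt_succ_iff.mp i.2) (Nat.le_of_not_lt h)
      rw [hz, this]
  refine ⟨z, ?_, ?_⟩
  · intro i j hij
    rw [hcomp i, hcomp j] at hij
    have := e.symm.injective (α.injective hij)
    exact Fin.ext this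
  · intro m R t
    have h1 : (fun k => ext1 v z (t k)) = α ∘ (fun k => e.symm ((t k : Fin (n+1)) : ℕ)) := by
      funext k; exact hcomp (t k)
    rw [h1]
    exact (α.map_rel R _).symm


lemma Zinf
    (ultra : ∀ (A : Type) [L.Structure A], Finite A → Nonempty (A ↪[L] F) →
      ∀ f g : A ↪[L] F, ∃ h : F ≃[L] F, ∀ a : A, f a = h (g a))
    (sap : ∀ (A B C : Type) [L.Structure A] [L.Structure B] [L.Structure C],
      Finite A → Finite B → Finite C →
      Nonempty (A ↪[L] F) → Nonempty (B ↪[L] F) → Nonempty (C ↪[L] F) →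
      ∀ (f : A ↪[L] B) (g : A ↪[L] C),
        ∃ (D : Type) (_ : L.Structure D), Finite D ∧ Nonempty (D ↪[L] F) ∧
          ∃ (f' : B ↪[L] D) (g' : C ↪[L] D),
            (∀ a : A, f' (f a) = g' (g a)) ∧
            (Set.range fun b => f' b) ∩ (Set.range fun c => g' c) =
              (Set.range fun a : A => f' (f a)) ∧
            (Set.range fun b => f' b) ∩ (Set.range fun c => g' c) =
              (Set.range fun a : A => g' (g a)))
    {n : ℕ} {v : Fin n → F} (hv : IsPE (L := L) e v) :
    {z : F | IsPE (L := L) e (ext1 v z)}.Infinite := by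
  by_contra hfin
  rw [Set.not_infinite] at hfin
  obtain ⟨z₀, hz₀⟩ := Znonempty e ultra hv
  set Zs : Set F := {z | IsPE (L := L) e (ext1 v z)} with hZs
  set Bs : Set F := Set.range v with hBs
  set Cs : Set F := Bs ∪ Zs with hCs
  have hBfin : Bs.Finite := Set.finite_range v
  have hCfin : Cs.Finite := hBfin.union hfin
  set subB := relSub (L := L) Bs with hsubB
  set subC := relSub (L := L) Cs with hsubC
  haveI finB : Finite subB := hBfin.to_subtype
  haveI finC : Finite subC := hCfin.to_subtype
  have hle : subB ≤ subC := fun x hx => Or.inl hx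
  set incl := Substructure.inclusion (L := L) hle with hincl
  obtain ⟨D, iD, finD, ⟨δ⟩, f', g', hag, hint1, hint2⟩ :=
    sap subB subC subC finB finC finC ⟨subB.subtype⟩ ⟨subC.subtype⟩ ⟨subC.subtype⟩ incl incl
  obtain ⟨α, hα⟩ := ultra subC finC ⟨subC.subtype⟩ subC.subtype (δ.comp f')
  set ψ : subC ↪[L] F := α.toEmbedding.comp (δ.comp g') with hψ
  have hψB : ∀ b : subB, ψ (incl b) = (b : F) := by
    intro b
    have h1 : ψ (incl b) = α (δ (g' (incl b))) := rfl
    rw [h1, ← hag b]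
    exact (hα (incl b)).symm
  have hz₀B : z₀ ∉ Bs := by
    rintro ⟨i, hi⟩
    have h1 : ext1 v z₀ ⟨(i : ℕ), lt_trans i.2 (Nat.lt_succ_self n)⟩ = v i := by
      rw [ext1_lt v z₀ i.2]
    have h2 : ext1 v z₀ (Fin.last n) = z₀ := ext1_last v z₀ (lt_irrefl n)
    have h3 := hz₀.1 (h1.trans (hi.trans h2.symm))
    have h4 := congrArg Fin.val h3
    simp [Fin.last] at h4
    omega
  have hvB : ∀ i : Fin n, v i ∈ Bs := fun i => ⟨i, rfl⟩
  set c₀ : subC := ⟨z₀, Set.mem_union_right _ (show z₀ ∈ Zs from hz₀)⟩ with hc₀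
  set zs := ψ c₀ with hzsdef
  have hψv : ∀ (i : Fin n), ψ ⟨v i, Set.mem_union_left _ (hvB i)⟩ = v i := by
    intro i
    have h1 : (⟨v i, Set.mem_union_left _ (hvB i)⟩ : subC) = incl ⟨v i, hvB i⟩ := rfl
    rw [h1]; exact hψB _
  set y : Fin (n+1) → subC :=
    fun i => if h : (i : ℕ) < n then ⟨v ⟨i, h⟩, Set.mem_union_left _ (hvB _)⟩ else c₀ with hy
  have hy1 : ∀ i, ψ (y i) = ext1 v zs i := by
    intro i
    by_cases h : (i : ℕ) < n
    · rw [hy]; simp only [dif_pos h]; rw [hψv ⟨i, h⟩, ext1_lt v zs h]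
    · rw [hy]; simp only [dif_neg h]; rw [ext1_last v zs h]
  have hy2 : ∀ i, ((y i : F)) = ext1 v z₀ i := by
    intro i
    by_cases h : (i : ℕ) < n
    · rw [hy]; simp only [dif_pos h]; rw [ext1_lt v z₀ h]
    · rw [hy]; simp only [dif_neg h]; rw [ext1_last v z₀ h]
  have hzs : IsPE (L := L) e (ext1 v zs) := by
    constructor
    · intro i j hij
      rw [← hy1 i, ← hy1 j] at hij
      have h2 := congrArg Subtype.val (ψ.injective hij)
      rw [hy2 i, hy2 j] at h2
      exact hz₀.1 h2
    · intro m R t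
      have h0 := hz₀.2 m R t
      have hmr := ψ.map_rel R (fun k => y (t k))
      have hL : (⇑ψ ∘ fun k => y (t k)) = fun k => ψ (y (t k)) := rfl
      rw [hL] at hmr
      have hR : RelMap (M := subC) R (fun k => y (t k))
          ↔ RelMap (M := F) R (fun k => ((y (t k) : F))) := Iff.rfl
      have e1 : (fun k => ext1 v zs (t k)) = fun k => ψ (y (t k)) :=
        funext fun k => (hy1 (t k)).symm
      have e2 : (fun k => ext1 v z₀ (t k)) = fun k => ((y (t k) : F)) :=
        funext fun k => (hy2 (t k)).symm
      rw [e2] at h0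
      rw [e1]
      exact h0.trans (hR.symm.trans hmr.symm)
  set cs : subC := ⟨zs, Set.mem_union_right _ (show zs ∈ Zs from hzs)⟩ with hcs
  have h4 : α (δ (f' cs)) = zs := (hα cs).symm
  have h5 : α (δ (g' c₀)) = zs := rfl
  have h6 : f' cs = g' c₀ := δ.injective (α.injective (h4.trans h5.symm))
  have h7 : g' c₀ ∈ (Set.range fun b => f' b) ∩ (Set.range fun c => g' c) :=
    ⟨⟨cs, h6⟩, ⟨c₀, rfl⟩⟩
  rw [hint2] at h7
  obtain ⟨a, ha⟩ := h7
  have h8 : incl a = c₀ := g'.injective ha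
  have h9 : (a : F) = z₀ := congrArg Subtype.val h8
  exact hz₀B (h9 ▸ a.2)


lemma extStep
    (ultra : ∀ (A : Type) [L.Structure A], Finite A → Nonempty (A ↪[L] F) →
      ∀ f g : A ↪[L] F, ∃ h : F ≃[L] F, ∀ a : A, f a = h (g a))
    (sap : ∀ (A B C : Type) [L.Structure A] [L.Structure B] [L.Structure C],
      Finite A → Finite B → Finite C →
      Nonempty (A ↪[L] F) → Nonempty (B ↪[L] F) → Nonempty (C ↪[L] F) →
      ∀ (f : A ↪[L] B) (g : A ↪[L] C),
        ∃ (D : Type) (_ : L.Structure D), Finite D ∧ Nonempty (D ↪[L] F) ∧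
          ∃ (f' : B ↪[L] D) (g' : C ↪[L] D),
            (∀ a : A, f' (f a) = g' (g a)) ∧
            (Set.range fun b => f' b) ∩ (Set.range fun c => g' c) =
              (Set.range fun a : A => f' (f a)) ∧
            (Set.range fun b => f' b) ∩ (Set.range fun c => g' c) =
              (Set.range fun a : A => g' (g a)))
    (w : F ↪[L] F) {n : ℕ} {v : Fin n → F} (hv : IsPE (L := L) e v) (N : ℕ) :
    ∃ z : F, IsPE (L := L) e (ext1 v z) ∧ N < e (w z) := by
  have hinf := Zinf e ultra sap hv
  by_contra hcon
  push_neg at hcon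
  apply hinf
  have hsub : {z : F | IsPE (L := L) e (ext1 v z)} ⊆ (fun z => e (w z)) ⁻¹' (Set.Iic N) :=
    fun z hz => hcon z hz
  have hinj : Function.Injective (fun z => e (w z)) := fun a b hab =>
    w.injective (e.injective hab)
  exact Set.Finite.subset ((Set.finite_Iic N).preimage hinj.injOn) hsub

lemma key
    (ultra : ∀ (A : Type) [L.Structure A], Finite A → Nonempty (A ↪[L] F) →
      ∀ f g : A ↪[L] F, ∃ h : F ≃[L] F, ∀ a : A, f a = h (g a))
    (sap : ∀ (A B C : Type) [L.Structure A] [L.Structure B] [L.Structure C],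
      Finite A → Finite B → Finite C →
      Nonempty (A ↪[L] F) → Nonempty (B ↪[L] F) → Nonempty (C ↪[L] F) →
      ∀ (f : A ↪[L] B) (g : A ↪[L] C),
        ∃ (D : Type) (_ : L.Structure D), Finite D ∧ Nonempty (D ↪[L] F) ∧
          ∃ (f' : B ↪[L] D) (g' : C ↪[L] D),
            (∀ a : A, f' (f a) = g' (g a)) ∧
            (Set.range fun b => f' b) ∩ (Set.range fun c => g' c) =
              (Set.range fun a : A => f' (f a)) ∧
            (Set.range fun b => f' b) ∩ (Set.range fun c => g' c) =
              (Set.range fun a : A => g' (g a)))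
    (w : F ↪[L] F) :
    ∃ w' : F ↪[L] F, (∀ x y : F, e x < e y → e (w' x) < e (w' y)) ∧
      ∀ x : F, w' x ∈ Set.range w := by
  classical
  let T : ℕ → Type := fun n => {v : Fin n → F // IsPE (L := L) e v ∧
    ∀ i j : Fin n, i < j → e (w (v i)) < e (w (v j))}
  have base_pe : IsPE (L := L) e (fun i : Fin 0 => (i.elim0 : F)) := by
    refine ⟨fun i => i.elim0, fun m R t => ?_⟩
    exact iff_of_eq (congrArg _ (funext fun k => (t k).elim0))
  let step : ∀ n, T n → T (n+1) := fun n p =>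
    let N := Finset.univ.sup fun i : Fin n => e (w (p.val i))
    let z := Classical.choose (extStep e ultra sap w p.2.1 N)
    ⟨ext1 p.val z, (Classical.choose_spec (extStep e ultra sap w p.2.1 N)).1, by
      intro i j hij
      have hij' : (i : ℕ) < (j : ℕ) := hij
      by_cases hj : (j : ℕ) < n
      · have hi : (i : ℕ) < n := lt_trans hij' hj
        rw [ext1_lt p.val z hi, ext1_lt p.val z hj]
        exact p.2.2 ⟨i, hi⟩ ⟨j, hj⟩ hij'
      · have hi : (i : ℕ) < n := by have := j.2; omega
        rw [ext1_lt p.val z hi, ext1_last p.val z hj]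
        have h1 : e (w (p.val ⟨i, hi⟩)) ≤ N :=
          Finset.le_sup (f := fun i : Fin n => e (w (p.val i))) (Finset.mem_univ (⟨i, hi⟩ : Fin n))
        exact lt_of_le_of_lt h1
          (Classical.choose_spec (extStep e ultra sap w p.2.1 N)).2⟩
  let U : ∀ n, T n := fun n =>
    Nat.rec ⟨fun i => i.elim0, base_pe, fun i _ _ => i.elim0⟩ step n
  have compat : ∀ (n : ℕ) (i : ℕ) (h : i < n) (h' : i < n + 1),
      (U (n+1)).val ⟨i, h'⟩ = (U n).val ⟨i, h⟩ :=
    fun n i h h' => ext1_lt (U n).val _ h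
  let u : ℕ → F := fun i => (U (i+1)).val ⟨i, Nat.lt_succ_self i⟩
  have hu : ∀ (n : ℕ) (i : Fin n), (U n).val i = u (i : ℕ) := by
    intro n
    induction n with
    | zero => exact fun i => i.elim0
    | succ n ih =>
      intro i
      by_cases h : (i : ℕ) < n
      · have h1 : (U (n+1)).val i = (U n).val ⟨i, h⟩ := by
          rw [← compat n i h i.2]
        rw [h1, ih ⟨i, h⟩]
      · have h2 : (i : ℕ) = n := by have := i.2; omega
        have hi : i = ⟨n, Nat.lt_succ_self n⟩ := Fin.ext h2
        rw [hi]
  have umono : ∀ i j : ℕ, i < j → e (w (u i)) < e (w (u j)):= by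
    intro i j hij
    have h1 := (U (j+1)).2.2 ⟨i, by omega⟩ ⟨j, by omega⟩ (by
      show (i : ℕ) < (j : ℕ); simpa using hij)
    rwa [hu (j+1) ⟨i, by omega⟩, hu (j+1) ⟨j, by omega⟩] at h1
  have upe : ∀ (m : ℕ) (R : L.Relations m) (s : Fin m → ℕ),
      RelMap (M := F) R (fun k => e.symm (s k)) ↔ RelMap R (fun k => u (s k)) := by
    intro m R s
    have hs : ∀ k, s k < (Finset.univ.sup s) + 1 :=
      fun k => Nat.lt_succ_of_le (Finset.le_sup (Finset.mem_univ k))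
    have h := (U ((Finset.univ.sup s) + 1)).2.1.2 m R (fun k => ⟨s k, hs k⟩)
    have h2 : (fun k => (U ((Finset.univ.sup s) + 1)).val ⟨s k, hs k⟩) =
        fun k => u (s k) := funext fun k => hu _ ⟨s k, hs k⟩
    rw [h2] at h
    exact h
  refine ⟨⟨⟨fun x => w (u (e x)), ?_⟩, fun f => isEmptyElim f, ?_⟩, ?_,
    fun x => ⟨u (e x), rfl⟩⟩
  · intro x y hxy
    simp only at hxy
    by_contra hne
    have hne2 : e x ≠ e y := fun hc => hne (e.injective hc)
    rcases Nat.lt_or_ge (e x) (e y) with hlt | hge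
    · exact absurd (congrArg e hxy) (Nat.ne_of_lt (umono _ _ hlt))
    · have hlt : e y < e x := by omega
      exact absurd (congrArg e hxy).symm (Nat.ne_of_lt (umono _ _ hlt))
  · intro m R x
    have h1 := upe m R (fun k => e (x k))
    have hx : (fun k => e.symm (e (x k))) = x := funext fun k => e.symm_apply_apply _
    rw [hx] at h1
    have h2 := w.map_rel R (fun k => u (e (x k)))
    exact h2.trans h1.symm
  · intro x y h
    exact umono _ _ h

end Stmt7Aux

theorem stmt7 {L : Language} [L.IsRelational]
    (F : Type) [L.Structure F] [Countable F] [Infinite F]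
    -- `F` is ultrahomogeneous
    (ultra : ∀ (A : Type) [L.Structure A], Finite A → Nonempty (A ↪[L] F) →
      ∀ f g : A ↪[L] F, ∃ h : F ≃[L] F, ∀ a : A, f a = h (g a))
    -- the age of `F` has the strong amalgamation property
    (sap : ∀ (A B C : Type) [L.Structure A] [L.Structure B] [L.Structure C],
      Finite A → Finite B → Finite C →
      Nonempty (A ↪[L] F) → Nonempty (B ↪[L] F) → Nonempty (C ↪[L] F) →
      ∀ (f : A ↪[L] B) (g : A ↪[L] C),
        ∃ (D : Type) (_ : L.Structure D), Finite D ∧ Nonempty (D ↪[L] F) ∧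
          ∃ (f' : B ↪[L] D) (g' : C ↪[L] D),
            (∀ a : A, f' (f a) = g' (g a)) ∧
            (Set.range fun b => f' b) ∩ (Set.range fun c => g' c) =
              (Set.range fun a : A => f' (f a)) ∧
            (Set.range fun b => f' b) ∩ (Set.range fun c => g' c) =
              (Set.range fun a : A => g' (g a)))
    -- `⊏` is a linear order on `F` of order type `ω`
    (ltF : F → F → Prop) (hltF : IsStrictTotalOrder F ltF)
    (homega : ∃ e : F ≃ ℕ, ∀ x y : F, ltF x y ↔ e x < e y)
    -- `(A, ≺)`: `A` embeds into `F` and `≺` is a linear order on `A`,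
    -- with `(A,≺)` finite or of order type `ω`
    (A : Type) [L.Structure A] (hAc : Countable A) (hAF : Nonempty (A ↪[L] F))
    (pa : A → A → Prop) (hpa : IsStrictTotalOrder A pa)
    (hK : Finite A ∨ ∃ e : A ≃ ℕ, ∀ x y : A, pa x y ↔ e x < e y)
    (t : ℕ) (ht : 1 ≤ t)
    -- hypothesis: `F ⟶ (F)^A_{k,t}` for all `k ≥ 2`
    (hRam : ∀ k, 2 ≤ k → ∀ χ : (A ↪[L] F) → Fin k, ∃ w : F ↪[L] F,
      (χ '' (Set.range fun f : A ↪[L] F => w.comp f)).ncard ≤ t) :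
    -- conclusion: `(F,⊏) ⟶ ((F,⊏))^{(A,≺)}_{k,t}` for all `k ≥ 2`
    ∀ k, 2 ≤ k →
      ∀ χ : {f : A ↪[L] F // ∀ x y : A, pa x y → ltF (f x) (f y)} → Fin k,
        ∃ w : {g : F ↪[L] F // ∀ x y : F, ltF x y → ltF (g x) (g y)},
          (χ '' {p | ∃ f₀ : {f : A ↪[L] F // ∀ x y : A, pa x y → ltF (f x) (f y)},
            p.val = w.val.comp f₀.val}).ncard ≤ t := by
  intro k hk χ
  obtain ⟨e, he⟩ := homega
  have hk0 : 0 < k := by omega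
  classical
  set χ' : (A ↪[L] F) → Fin k := fun f =>
    if h : ∀ x y : A, pa x y → ltF (f x) (f y) then χ ⟨f, h⟩ else ⟨0, hk0⟩ with hχ'
  obtain ⟨w, hw⟩ := hRam k hk χ'
  obtain ⟨w', hmono, hrange⟩ := Stmt7Aux.key e ultra sap w
  have hord : ∀ x y : F, ltF x y → ltF (w' x) (w' y) := by
    intro x y h
    rw [he] at h ⊢
    exact hmono x y h
  refine ⟨⟨w', hord⟩, ?_⟩
  have hsub : (χ '' {p | ∃ f₀ : {f : A ↪[L] F // ∀ x y : A, pa x y → ltF (f x) (f y)},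
      p.val = w'.comp f₀.val}) ⊆ χ' '' (Set.range fun f : A ↪[L] F => w.comp f) := by
    rintro c ⟨p, ⟨f₀, hpf⟩, rfl⟩
    have hchoice : ∀ a : A, ∃ b : F, w b = w' (f₀.val a) := fun a => hrange (f₀.val a)
    set fb : A → F := fun a => Classical.choose (hchoice a) with hfb
    have hfbs : ∀ a, w (fb a) = w' (f₀.val a) := fun a => Classical.choose_spec (hchoice a)
    have hfinj : Function.Injective fb := by
      intro a b hab
      apply f₀.val.injective
      apply w'.injective
      rw [← hfbs a, ← hfbs b, hab]
    have hfrel : ∀ (m : ℕ) (R : L.Relations m) (x : Fin m → A),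
        Language.Structure.RelMap R (fb ∘ x) ↔ Language.Structure.RelMap R x := by
      intro m R x
      have h1 := w.map_rel R (fb ∘ x)
      have h2 : (⇑w ∘ (fb ∘ x)) = ⇑(w'.comp f₀.val) ∘ x := funext fun kk => hfbs (x kk)
      rw [h2] at h1
      exact h1.symm.trans ((w'.comp f₀.val).map_rel R x)
    set f : A ↪[L] F :=
      ⟨⟨fb, hfinj⟩, fun ff => isEmptyElim ff, fun {m} R x => hfrel m R x⟩ with hf
    have hcomp : w.comp f = w'.comp f₀.val := Language.Embedding.ext fun a => hfbs a
    have hop : ∀ x y : A, pa x y → ltF ((w.comp f) x) ((w.comp f) y) := by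
      intro x y h
      have h3 := hord _ _ (f₀.2 x y h)
      rw [hcomp]
      exact h3
    refine ⟨w.comp f, ⟨f, rfl⟩, ?_⟩
    have hpe : p = ⟨w.comp f, hop⟩ := Subtype.ext (by rw [hpf]; exact hcomp.symm)
    simp only [hχ']
    rw [dif_pos hop, hpe]
  have hfin : (χ' '' (Set.range fun f : A ↪[L] F => w.comp f)).Finite := Set.toFinite _
  exact le_trans (Set.ncard_le_ncard hsub hfin) hw
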